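/- Let G be any Σ-system over Σ = {◆, ■} whose production rules are all of the form ◆ ⟶ ■ⁿ◆ᵏ or ■ ⟶ ■ᵏ◆ⁿ (closed under this pairing). Let L = L_{S4 ∪ G}(a) be the language derivable from a character a ∈ Σ in the union of S4 = {◆ ⟶ ε, ■ ⟶ ε, ◆ ⟶ ◆◆, ■ ⟶ ■■} with G. Then either L = L_{S4}(a) or L = L_{S5}(a), where S5 = {◆ ⟶ ε, ■ ⟶ ε, ◆ ⟶ ■◆, ■ ⟶ ■◆}. -/

import Mathlib

/-- The two-character alphabet Σ = {◆, ■}. -/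
inductive Ch : Type
  | fd  -- ◆
  | bd  -- ■
deriving DecidableEq

/-- A Σ-system is a set of production rules `a ⟶ r`. -/
abbrev SigmaSystem : Type := Set (Ch × List Ch)

/-- One-step derivation. -/
def Step (S : SigmaSystem) (x y : List Ch) : Prop :=
  ∃ (s' t' : List Ch) (a : Ch) (r : List Ch),
    (a, r) ∈ S ∧ x = s' ++ [a] ++ t' ∧ y = s' ++ r ++ t'

/-- The derivation relation: reflexive-transitive closure of one-step derivation. -/
def Derives (S : SigmaSystem) : List Ch → List Ch → Prop :=
  Relation.ReflTransGen (Step S)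

/-- The Σ-system S4 = {◆ ⟶ ε, ■ ⟶ ε, ◆ ⟶ ◆◆, ■ ⟶ ■■}. -/
def S4 : SigmaSystem :=
  {(Ch.fd, []), (Ch.bd, []), (Ch.fd, [Ch.fd, Ch.fd]), (Ch.bd, [Ch.bd, Ch.bd])}

/-- The Σ-system S5 = {◆ ⟶ ε, ■ ⟶ ε, ◆ ⟶ ■◆, ■ ⟶ ■◆}. -/
def S5 : SigmaSystem :=
  {(Ch.fd, []), (Ch.bd, []), (Ch.fd, [Ch.bd, Ch.fd]), (Ch.bd, [Ch.bd, Ch.fd])}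

lemma step_mono {S T : SigmaSystem} (h : S ⊆ T) {x y : List Ch} (hs : Step S x y) :
    Step T x y := by
  obtain ⟨s', t', a, r, hm, hx, hy⟩ := hs
  exact ⟨s', t', a, r, h hm, hx, hy⟩

lemma derives_mono {S T : SigmaSystem} (h : S ⊆ T) {x y : List Ch} (hd : Derives S x y) :
    Derives T x y :=
  Relation.ReflTransGen.mono (fun _ _ => step_mono h) _ _ hd

lemma step_context {S : SigmaSystem} (l r : List Ch) {x y : List Ch} (h : Step S x y) :
    Step S (l ++ x ++ r) (l ++ y ++ r) := by
  obtain ⟨s', t', a, rr, hm, hx, hy⟩ := h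
  exact ⟨l ++ s', t' ++ r, a, rr, hm, by simp [hx], by simp [hy]⟩

lemma derives_context {S : SigmaSystem} (l r : List Ch) {x y : List Ch} (h : Derives S x y) :
    Derives S (l ++ x ++ r) (l ++ y ++ r) := by
  induction h with
  | refl => exact Relation.ReflTransGen.refl
  | tail _ hstep ih => exact ih.tail (step_context l r hstep)

lemma derives_append {S : SigmaSystem} {x x' y y' : List Ch}
    (h1 : Derives S x x') (h2 : Derives S y y') :
    Derives S (x ++ y) (x' ++ y') := by
  have a1 : Derives S (x ++ y) (x' ++ y) := by
    have := derives_context (S := S) [] y h1; simpa using this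
  have a2 : Derives S (x' ++ y) (x' ++ y') := by
    have := derives_context (S := S) x' [] h2; simpa using this
  exact a1.trans a2

lemma derives_single {S : SigmaSystem} {a : Ch} {r : List Ch} (h : (a, r) ∈ S) :
    Derives S [a] r :=
  Relation.ReflTransGen.single ⟨[], [], a, r, h, by simp, by simp⟩

lemma derives_del {S : SigmaSystem} (hf : (Ch.fd, ([] : List Ch)) ∈ S)
    (hb : (Ch.bd, ([] : List Ch)) ∈ S) (x : List Ch) : Derives S x [] := by
  induction x with
  | nil => exact Relation.ReflTransGen.refl
  | cons c t ih =>
    have h : (c, ([] : List Ch)) ∈ S := by cases c <;> assumption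
    have s1 : Step S (c :: t) t := ⟨[], t, c, [], h, by simp, by simp⟩
    exact Relation.ReflTransGen.trans (Relation.ReflTransGen.single s1) ih

lemma derives_rep_S4 (c : Ch) (k : ℕ) : Derives S4 [c] (List.replicate k c) := by
  have hdel : (c, ([] : List Ch)) ∈ S4 := by cases c <;> simp [S4]
  have hdup : (c, [c, c]) ∈ S4 := by cases c <;> simp [S4]
  induction k with
  | zero => simpa using derives_single hdel
  | succ k ih =>
    have s1 : Derives S4 [c] [c, c] := derives_single hdup
    have : Derives S4 ([c] ++ [c]) ([c] ++ List.replicate k c) :=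
      derives_append Relation.ReflTransGen.refl ih
    exact s1.trans (by simpa [List.replicate_succ, Derives] using this)

lemma derives_univ {S : SigmaSystem}
    (H1 : ∀ c : Ch, Derives S [c] [])
    (H2 : ∀ c d : Ch, Derives S [c] [d])
    (H3 : ∀ c : Ch, Derives S [c] [c, c]) :
    ∀ (t : List Ch) (a : Ch), Derives S [a] t := by
  intro t
  induction t with
  | nil => intro a; exact H1 a
  | cons d t' ih =>
    intro a
    have h2 : Derives S ([a] ++ [a]) ([d] ++ t') := derives_append (H2 a d) (ih a)
    exact (H3 a).trans (by simpa [Derives] using h2)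
/-- For any Σ-system G whose rules are of the forms ◆ ⟶ ■ⁿ◆ᵏ and ■ ⟶ ■ᵏ◆ⁿ and
closed under this pairing, the language of S4 ∪ G from a character `a` is either
the language of S4 from `a` or the language of S5 from `a`. -/
theorem language_S4_union_G (G : SigmaSystem)
    (hshape : ∀ p ∈ G, ∃ n k : ℕ,
      p = (Ch.fd, List.replicate n Ch.bd ++ List.replicate k Ch.fd) ∨
      p = (Ch.bd, List.replicate k Ch.bd ++ List.replicate n Ch.fd))
    (hpair : ∀ n k : ℕ,
      (Ch.fd, List.replicate n Ch.bd ++ List.replicate k Ch.fd) ∈ G ↔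
      (Ch.bd, List.replicate k Ch.bd ++ List.replicate n Ch.fd) ∈ G)
    (a : Ch) :
    {t : List Ch | Derives (S4 ∪ G) [a] t} = {t : List Ch | Derives S4 [a] t} ∨
    {t : List Ch | Derives (S4 ∪ G) [a] t} = {t : List Ch | Derives S5 [a] t} := by
  have hfd4 : (Ch.fd, ([] : List Ch)) ∈ S4 := by simp [S4]
  have hbd4 : (Ch.bd, ([] : List Ch)) ∈ S4 := by simp [S4]
  by_cases hP : ∃ n k : ℕ,
      (Ch.fd, List.replicate (n+1) Ch.bd ++ List.replicate k Ch.fd) ∈ G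
  · -- nontrivial case: language is everything, equal to L_{S5}(a)
    right
    obtain ⟨n, k, hmem⟩ := hP
    have hmem' : (Ch.bd, List.replicate k Ch.bd ++ List.replicate (n+1) Ch.fd) ∈ G :=
      (hpair (n+1) k).mp hmem
    set S : SigmaSystem := S4 ∪ G with hS
    have hsub : S4 ⊆ S := Set.subset_union_left
    have hfd : (Ch.fd, ([] : List Ch)) ∈ S := hsub hfd4
    have hbd : (Ch.bd, ([] : List Ch)) ∈ S := hsub hbd4
    -- H1
    have H1 : ∀ c : Ch, Derives S [c] [] := fun c => derives_del hfd hbd [c]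
    have H1' : ∀ c : Ch, Derives S5 [c] [] := fun c =>
      derives_del (by simp [S5]) (by simp [S5]) [c]
    -- H3 : duplication
    have H3 : ∀ c : Ch, Derives S [c] [c, c] := fun c =>
      derives_mono hsub (derives_rep_S4 c 2)
    -- H2 : char swap
    have H2 : ∀ c d : Ch, Derives S [c] [d] := by
      intro c d
      cases c <;> cases d
      · exact Relation.ReflTransGen.refl
      · -- fd ⇒ bd : use G rule fd → bd^{n+1} fd^k
        have s1 : Derives S [Ch.fd]
            (List.replicate (n+1) Ch.bd ++ List.replicate k Ch.fd) :=
          derives_single (Set.mem_union_right _ hmem)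
        refine s1.trans ?_
        have : Derives S ([Ch.bd] ++ (List.replicate n Ch.bd ++ List.replicate k Ch.fd))
            ([Ch.bd] ++ []) :=
          derives_append Relation.ReflTransGen.refl (derives_del hfd hbd _)
        simpa [List.replicate_succ, Derives] using this
      · -- bd ⇒ fd : use G rule bd → bd^k fd^{n+1}
        have s1 : Derives S [Ch.bd]
            (List.replicate k Ch.bd ++ List.replicate (n+1) Ch.fd) :=
          derives_single (Set.mem_union_right _ hmem')
        refine s1.trans ?_
        have h2 : Derives S (List.replicate k Ch.bd ++ (Ch.fd :: List.replicate n Ch.fd))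
            ([] ++ [Ch.fd]) := by
          refine derives_append (derives_del hfd hbd _) ?_
          have := derives_context (S := S) [Ch.fd] [] (derives_del hfd hbd (List.replicate n Ch.fd))
          simpa using this
        simpa [List.replicate_succ, Derives] using h2
      · exact Relation.ReflTransGen.refl
    have H2' : ∀ c d : Ch, Derives S5 [c] [d] := by
      intro c d
      cases c <;> cases d
      · exact Relation.ReflTransGen.refl
      · -- fd → [bd,fd] → [bd]
        refine (derives_single (show (Ch.fd, [Ch.bd, Ch.fd]) ∈ S5 by simp [S5])).trans ?_
        have := derives_context (S := S5) [Ch.bd] []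
          (derives_del (S := S5) (by simp [S5]) (by simp [S5]) [Ch.fd])
        simpa [Derives] using this
      · -- bd → [bd,fd] → [fd]
        refine (derives_single (show (Ch.bd, [Ch.bd, Ch.fd]) ∈ S5 by simp [S5])).trans ?_
        have : Derives S5 ([Ch.bd] ++ [Ch.fd]) ([] ++ [Ch.fd]) :=
          derives_append (derives_del (by simp [S5]) (by simp [S5]) _)
            Relation.ReflTransGen.refl
        simpa [Derives] using this
      · exact Relation.ReflTransGen.refl
    have H3' : ∀ c : Ch, Derives S5 [c] [c, c] := by
      intro c
      cases c
      · refine (derives_single (show (Ch.fd, [Ch.bd, Ch.fd]) ∈ S5 by simp [S5])).trans ?_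
        have : Derives S5 ([Ch.bd] ++ [Ch.fd]) ([Ch.fd] ++ [Ch.fd]) :=
          derives_append (H2' Ch.bd Ch.fd) Relation.ReflTransGen.refl
        simpa [Derives] using this
      · refine (derives_single (show (Ch.bd, [Ch.bd, Ch.fd]) ∈ S5 by simp [S5])).trans ?_
        have : Derives S5 ([Ch.bd] ++ [Ch.fd]) ([Ch.bd] ++ [Ch.bd]) :=
          derives_append Relation.ReflTransGen.refl (H2' Ch.fd Ch.bd)
        simpa [Derives] using this
    have h1 : ∀ t : List Ch, Derives S [a] t := fun t => derives_univ H1 H2 H3 t a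
    have h2 : ∀ t : List Ch, Derives S5 [a] t := fun t => derives_univ H1' H2' H3' t a
    exact Set.ext fun t => iff_of_true (h1 t) (h2 t)
  · -- trivial case
    left
    push_neg at hP
    have key : ∀ x y : List Ch, Step (S4 ∪ G) x y → Derives S4 x y := by
      rintro x y ⟨s', t', c, r, hm, hx, hy⟩
      subst hx hy
      rcases hm with hm | hm
      · exact Relation.ReflTransGen.single ⟨s', t', c, r, hm, rfl, rfl⟩
      · obtain ⟨nn, kk, hcase | hcase⟩ := hshape _ hm
        · rw [hcase] at hm
          injection hcase with h1 h2
          subst h1 h2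
          have hn0 : nn = 0 := by
            cases nn with
            | zero => rfl
            | succ m => exact absurd hm (hP m kk)
          subst hn0
          have : Derives S4 [Ch.fd] (List.replicate kk Ch.fd) := derives_rep_S4 Ch.fd kk
          simpa using derives_context s' t' this
        · rw [hcase] at hm
          injection hcase with h1 h2
          subst h1 h2
          have hm' : (Ch.fd, List.replicate nn Ch.bd ++ List.replicate kk Ch.fd) ∈ G :=
            (hpair nn kk).mpr hm
          have hn0 : nn = 0 := by
            cases nn with
            | zero => rfl
            | succ m => exact absurd hm' (hP m kk)
          subst hn0
          have : Derives S4 [Ch.bd] (List.replicate kk Ch.bd) := derives_rep_S4 Ch.bd kk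
          simpa using derives_context s' t' this
    have key2 : ∀ x y : List Ch, Derives (S4 ∪ G) x y → Derives S4 x y := by
      intro x y h
      induction h with
      | refl => exact Relation.ReflTransGen.refl
      | tail _ hstep ih => exact ih.trans (key _ _ hstep)
    exact Set.ext fun t => ⟨key2 _ _, derives_mono Set.subset_union_left⟩
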